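/- A dual matrix X̂ = X + εR is a dual Drazin generalized inverse of Â = A + εB (with Ind(Â) = k) if and only if X = A^D and the real matrices satisfy: (1) A^k A^D B + A^k R A + (A^{k-1}B + A^{k-2}BA + ⋯ + BA^{k-1})(A^D A − I) = 0; (2) R = A^D A R + A^D B A^D + R A A^D; (3) A R + B A^D = R A + A^D B. -/
import Mathlib


open Matrix Finset

noncomputable section

/-- The dual matrix `A + εB` as a matrix over the dual numbers `ℝ[ε]/(ε²)`. -/
def dmat {m : Type*} (A B : Matrix m m ℝ) : Matrix m m (DualNumber ℝ) :=
  Matrix.of fun i j => TrivSqZeroExt.inl (A i j) + TrivSqZeroExt.inr (B i j)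

/-- `x` is a Drazin inverse of `a` with index parameter `k`
(for `k = 1` this is the group inverse). -/
def IsDrazin {R : Type*} [Monoid R] (k : ℕ) (a x : R) : Prop :=
  a ^ k * x * a = a ^ k ∧ x * a * x = x ∧ a * x = x * a

/-- `A` has index `k`: `k` is the smallest nonnegative integer with
`rank (A^k) = rank (A^(k+1))`. -/
def hasIndex {m : Type*} [Fintype m] [DecidableEq m] (A : Matrix m m ℝ) (k : ℕ) : Prop :=
  (A ^ (k + 1)).rank = (A ^ k).rank ∧ ∀ j < k, (A ^ (j + 1)).rank ≠ (A ^ j).rank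

/-- `D = A^{k-1} B + A^{k-2} B A + ⋯ + B A^{k-1}`. -/
def dsum {m : Type*} [Fintype m] [DecidableEq m] (A B : Matrix m m ℝ) (k : ℕ) :
    Matrix m m ℝ :=
  ∑ i ∈ Finset.range k, A ^ i * B * A ^ (k - 1 - i)


lemma dmat_eq_iff {m : Type*} (A B C D : Matrix m m ℝ) :
    dmat A B = dmat C D ↔ A = C ∧ B = D := by
  constructor
  · intro h
    constructor <;> ext i j
    · have := congrFun (congrFun h i) j
      simpa [dmat] using congrArg TrivSqZeroExt.fst this
    · have := congrFun (congrFun h i) j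
      simpa [dmat] using congrArg TrivSqZeroExt.snd this
  · rintro ⟨rfl, rfl⟩; rfl

lemma dmat_one {m : Type*} [Fintype m] [DecidableEq m] :
    (1 : Matrix m m (DualNumber ℝ)) = dmat 1 0 := by
  ext i j <;> simp [dmat, Matrix.one_apply] <;> split <;> simp

lemma dmat_mul {m : Type*} [Fintype m] [DecidableEq m] (A B C D : Matrix m m ℝ) :
    dmat A B * dmat C D = dmat (A * C) (A * D + B * C) := by
  ext i j <;>
    simp [dmat, Matrix.mul_apply, TrivSqZeroExt.fst_sum, TrivSqZeroExt.snd_sum,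
      Finset.sum_add_distrib, mul_comm]

lemma dsum_succ {m : Type*} [Fintype m] [DecidableEq m] (A B : Matrix m m ℝ) (k : ℕ) :
    dsum A B (k + 1) = dsum A B k * A + A ^ k * B := by
  unfold dsum
  rw [Finset.sum_range_succ, Finset.sum_mul]
  congr 1
  · apply Finset.sum_congr rfl
    intro i hi
    rw [Finset.mem_range] at hi
    have h1 : k + 1 - 1 - i = (k - 1 - i) + 1 := by omega
    rw [h1, pow_succ, ← mul_assoc]
  · simp

lemma dmat_pow {m : Type*} [Fintype m] [DecidableEq m] (A B : Matrix m m ℝ) (k : ℕ) :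
    (dmat A B) ^ k = dmat (A ^ k) (dsum A B k) := by
  induction k with
  | zero => simpa [dsum] using dmat_one
  | succ k ih =>
    rw [pow_succ, ih, dmat_mul, ← pow_succ, dsum_succ, add_comm (A ^ k * B)]

lemma drazin_unique {M : Type*} [Monoid M] {k : ℕ} {a x y : M}
    (hx : IsDrazin k a x) (hy : IsDrazin k a y) : x = y := by
  obtain ⟨h1, h2, h3⟩ := hx
  obtain ⟨g1, g2, g3⟩ := hy
  have cax : Commute a x := h3
  have cay : Commute a y := g3
  have hxe : ∀ m, x * (x * a) ^ m = x := by
    intro m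
    induction m with
    | zero => simp
    | succ m ih => rw [pow_succ, ← mul_assoc, ih, ← h3, ← mul_assoc, h2]
  have hfy : a * y * y = y := by rw [g3]; exact g2
  have hye : ∀ m, (a * y) ^ m * y = y := by
    intro m
    induction m with
    | zero => simp
    | succ m ih => rw [pow_succ, mul_assoc, hfy, ih]
  have hakf : a ^ k * (a * y) = a ^ k := by rw [g3, ← mul_assoc, g1]
  have heak : (a * x) * a ^ k = a ^ k :=
    calc (a * x) * a ^ k = a * (x * a ^ k) := by rw [mul_assoc]
    _ = a * (a ^ k * x) := by rw [← (cax.pow_left k).eq]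
    _ = a ^ k * (a * x) := by rw [← mul_assoc, ← pow_succ', pow_succ, mul_assoc]
    _ = a ^ k := by rw [h3, ← mul_assoc, h1]
  have hx1 : x = x ^ (k + 1) * a ^ k := by
    conv_lhs => rw [← hxe k, (cax.symm).mul_pow, ← mul_assoc, ← pow_succ']
  have hy1 : y = a ^ k * y ^ (k + 1) := by
    conv_lhs => rw [← hye k, cay.mul_pow, mul_assoc, ← pow_succ]
  have hxy : x = (a * x) * y := by
    calc x = x ^ (k + 1) * a ^ k := hx1
    _ = x ^ (k + 1) * (a ^ k * (a * y)) := by rw [hakf]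
    _ = (x ^ (k + 1) * a ^ k) * (a * y) := by rw [mul_assoc]
    _ = x * (a * y) := by rw [← hx1]
    _ = (x * a) * y := by rw [mul_assoc]
    _ = (a * x) * y := by rw [h3]
  have hyy : y = (a * x) * y := by
    calc y = a ^ k * y ^ (k + 1) := hy1
    _ = ((a * x) * a ^ k) * y ^ (k + 1) := by rw [heak]
    _ = (a * x) * (a ^ k * y ^ (k + 1)) := by rw [mul_assoc]
    _ = (a * x) * y := by rw [← hy1]
  rw [hxy, ← hyy]

theorem ddgi_characterization {n k : ℕ} (A B AD X R : Matrix (Fin n) (Fin n) ℝ)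
    (hk : hasIndex A k) (hAD : IsDrazin k A AD) :
    IsDrazin k (dmat A B) (dmat X R) ↔
      (X = AD ∧
       A ^ k * AD * B + A ^ k * R * A + dsum A B k * (AD * A - 1) = 0 ∧
       R = AD * A * R + AD * B * AD + R * A * AD ∧
       A * R + B * AD = R * A + AD * B) := by
  simp only [IsDrazin, dmat_pow, dmat_mul, dmat_eq_iff]
  constructor
  · rintro ⟨⟨e1, e1'⟩, ⟨e2, e2'⟩, e3, e3'⟩
    have hX : X = AD := drazin_unique ⟨e1, e2, e3⟩ hAD
    subst hX
    refine ⟨rfl, ?_, ?_, ?_⟩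
    · have h : A ^ k * X * B + A ^ k * R * A + dsum A B k * (X * A - 1) =
          (A ^ k * X * B + (A ^ k * R + dsum A B k * X) * A) - dsum A B k := by
        noncomm_ring
      rw [h, e1', sub_self]
    · refine e2'.symm.trans ?_
      noncomm_ring
    · rw [e3', add_comm]
  · rintro ⟨rfl, c1, c2, c3⟩
    obtain ⟨d1, d2, d3⟩ := hAD
    refine ⟨⟨d1, ?_⟩, ⟨d2, ?_⟩, d3, ?_⟩
    · have h : A ^ k * X * B + (A ^ k * R + dsum A B k * X) * A =
          (A ^ k * X * B + A ^ k * R * A + dsum A B k * (X * A - 1)) + dsum A B k := by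
        noncomm_ring
      rw [h, c1, zero_add]
    · refine Eq.trans ?_ c2.symm
      noncomm_ring
    · rw [c3, add_comm]
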